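/- Let Z be a real-valued random variable with E[Z²] < ∞ and cumulative distribution function G(t) = P(Z ≤ t). For any real a and any real b > 0, the function u ↦ u·[G(−bu − a) − 1{u < 0}] is integrable over ℝ and ∫_ℝ u·[G(−bu − a) − 1{u < 0}] du = (1/b²)·( a²/2 + E[Z²]/2 + a·E[Z] ). -/

import Mathlib

open MeasureTheory

/-- Let `Z` be a real random variable with `E[Z²] < ∞` and c.d.f.
`G t = P(Z ≤ t)`. For any real `a` and any real `b > 0`, the function
`u ↦ u·(G(−bu − a) − 1{u < 0})` is integrable over `ℝ` and
`∫ u, u·(G(−bu − a) − 1{u < 0}) du = (1/b²)·(a²/2 + E[Z²]/2 + a·E[Z])`. -/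
theorem integral_mul_cdf_shift {Ω : Type*} [MeasurableSpace Ω] (μ : Measure Ω)
    [IsProbabilityMeasure μ] (Z : Ω → ℝ) (hZmeas : Measurable Z)
    (hZsq : Integrable (fun ω => (Z ω) ^ 2) μ) (a b : ℝ) (hb : 0 < b)
    (G : ℝ → ℝ) (hG : ∀ t : ℝ, G t = (μ {ω | Z ω ≤ t}).toReal) :
    Integrable (fun u : ℝ => u * (G (-b * u - a) - (if u < 0 then (1 : ℝ) else 0)))
      volume ∧
      ∫ u : ℝ, u * (G (-b * u - a) - (if u < 0 then (1 : ℝ) else 0)) =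
        (1 / b ^ 2) * (a ^ 2 / 2 + (∫ ω, (Z ω) ^ 2 ∂μ) / 2 + a * ∫ ω, Z ω ∂μ) := by
  classical
  set W : Ω → ℝ := fun ω => (-a - Z ω) / b with hW
  have hWmeas : Measurable W := (measurable_const.sub hZmeas).div_const b
  have hZint : Integrable Z μ := by
    have h2 : MemLp Z 2 μ :=
      (memLp_two_iff_integrable_sq hZmeas.aestronglyMeasurable).2 hZsq
    exact h2.integrable (by norm_num)
  have hWsq : Integrable (fun ω => W ω ^ 2) μ := by
    have hEq : (fun ω => W ω ^ 2)
        = fun ω => (a ^ 2 + 2 * a * Z ω + Z ω ^ 2) / b ^ 2 := by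
      funext ω
      have : W ω = (-a - Z ω) / b := rfl
      rw [this]
      field_simp
      ring
    rw [hEq]
    exact (((integrable_const _).add (hZint.const_mul _)).add hZsq).div_const _
  set g : ℝ → Ω → ℝ := fun u ω =>
    u * ((if u ≤ W ω then (1 : ℝ) else 0) - (if u < 0 then (1 : ℝ) else 0)) with hg
  have hgnn : ∀ u ω, 0 ≤ g u ω := by
    intro u ω
    simp only [hg]
    split_ifs with h1 h2 h2
    · simp
    · have hu : 0 ≤ u := not_lt.1 h2
      nlinarith
    · nlinarith
    · simp
  -- the set identity
  have hset : ∀ u : ℝ, {ω | Z ω ≤ -b * u - a} = {ω | u ≤ W ω} := by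
    intro u
    ext ω
    simp only [Set.mem_setOf_eq, hW, le_div_iff₀ hb]
    constructor <;> intro h <;> nlinarith
  have hmeasset : ∀ u : ℝ, MeasurableSet {ω | u ≤ W ω} := fun u =>
    measurableSet_le measurable_const hWmeas
  have hind_int : ∀ u : ℝ,
      Integrable (fun ω => if u ≤ W ω then (1 : ℝ) else 0) μ := by
    intro u
    have : (fun ω => if u ≤ W ω then (1 : ℝ) else 0)
        = Set.indicator {ω | u ≤ W ω} (fun _ => (1 : ℝ)) := by
      funext ω
      simp [Set.indicator_apply, Set.mem_setOf_eq]
    rw [this]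
    exact (integrable_const 1).indicator (hmeasset u)
  have hgint : ∀ u : ℝ, Integrable (g u) μ := by
    intro u
    exact ((hind_int u).sub (integrable_const _)).const_mul u
  -- pointwise identity A
  have hA : ∀ u : ℝ,
      u * (G (-b * u - a) - (if u < 0 then (1 : ℝ) else 0)) = ∫ ω, g u ω ∂μ := by
    intro u
    have h1 : ∫ ω, g u ω ∂μ
        = u * ∫ ω, ((if u ≤ W ω then (1 : ℝ) else 0)
            - (if u < 0 then (1 : ℝ) else 0)) ∂μ := by
      simp only [hg]
      rw [integral_const_mul]
    have h2 : ∫ ω, ((if u ≤ W ω then (1 : ℝ) else 0)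
        - (if u < 0 then (1 : ℝ) else 0)) ∂μ
        = (μ {ω | u ≤ W ω}).toReal - (if u < 0 then (1 : ℝ) else 0) := by
      rw [integral_sub (hind_int u) (integrable_const _), integral_const]
      have h3 : ∫ ω, (if u ≤ W ω then (1 : ℝ) else 0) ∂μ
          = (μ {ω | u ≤ W ω}).toReal := by
        have : (fun ω => if u ≤ W ω then (1 : ℝ) else 0)
            = Set.indicator {ω | u ≤ W ω} (fun _ => (1 : ℝ)) := by
          funext ω
          simp [Set.indicator_apply, Set.mem_setOf_eq]
        rw [this, integral_indicator_const _ (hmeasset u)]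
        simp [measureReal_def]
      rw [h3]
      simp [measure_univ]
    rw [h1, h2, hG, hset u]
  -- the nonnegativity of f
  have hfnn : ∀ u : ℝ,
      0 ≤ u * (G (-b * u - a) - (if u < 0 then (1 : ℝ) else 0)) := by
    intro u
    rw [hA u]
    exact integral_nonneg fun ω => hgnn u ω
  -- measurability of f
  have hGmono : Monotone G := by
    intro s t hst
    rw [hG, hG]
    exact ENNReal.toReal_mono (measure_ne_top μ _)
      (measure_mono fun ω h => le_trans h hst)
  have hfmeas : Measurable
      (fun u : ℝ => u * (G (-b * u - a) - (if u < 0 then (1 : ℝ) else 0))) := by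
    apply measurable_id.mul
    apply Measurable.sub
    · exact hGmono.measurable.comp ((measurable_const.mul measurable_id).sub
        measurable_const)
    · exact Measurable.ite measurableSet_Iio measurable_const measurable_const
  -- pointwise lintegral identity C
  have hC : ∀ u : ℝ,
      ENNReal.ofReal (u * (G (-b * u - a) - (if u < 0 then (1 : ℝ) else 0)))
        = ∫⁻ ω, ENNReal.ofReal (g u ω) ∂μ := by
    intro u
    rw [hA u]
    exact ofReal_integral_eq_lintegral_ofReal (hgint u)
      (Filter.Eventually.of_forall fun ω => hgnn u ω)
  -- measurability of g as a function on the product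
  have hgprod : Measurable (fun p : ℝ × Ω => g p.1 p.2) := by
    apply Measurable.mul measurable_fst
    apply Measurable.sub
    · exact Measurable.ite
        (measurableSet_le measurable_fst (hWmeas.comp measurable_snd))
        measurable_const measurable_const
    · exact Measurable.ite (measurable_fst measurableSet_Iio)
        measurable_const measurable_const
  -- inner integral computation E
  have hE : ∀ ω : Ω,
      ∫⁻ u : ℝ, ENNReal.ofReal (g u ω) = ENNReal.ofReal (W ω ^ 2 / 2) := by
    intro ω
    rcases le_or_gt 0 (W ω) with hw | hw
    · -- W ω ≥ 0 : g (·, ω) is the indicator of Ioc 0 (W ω) of id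
      have hgeq : ∀ u : ℝ, g u ω = Set.indicator (Set.Ioc 0 (W ω)) id u := by
        intro u
        rcases lt_trichotomy u 0 with hu | hu | hu
        · have h1 : u ≤ W ω := le_trans hu.le hw
          have h2 : u ∉ Set.Ioc 0 (W ω) := by
            simp only [Set.mem_Ioc, not_and_or, not_lt]
            left; exact hu.le
          simp [hg, h1, hu, Set.indicator_of_notMem h2]
        · subst hu
          have h2 : (0 : ℝ) ∉ Set.Ioc (0 : ℝ) (W ω) := by simp
          simp [hg, Set.indicator_of_notMem h2]
        · rcases le_or_gt u (W ω) with h1 | h1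
          · have h2 : u ∈ Set.Ioc 0 (W ω) := ⟨hu, h1⟩
            simp [hg, h1, not_lt.2 hu.le, Set.indicator_of_mem h2]
          · have h2 : u ∉ Set.Ioc 0 (W ω) := by
              simp only [Set.mem_Ioc, not_and_or, not_le]
              right; exact h1
            simp [hg, not_le.2 h1, not_lt.2 hu.le, Set.indicator_of_notMem h2]
      have hcomm : ∀ u : ℝ, ENNReal.ofReal (Set.indicator (Set.Ioc 0 (W ω)) id u)
          = Set.indicator (Set.Ioc 0 (W ω)) (fun u => ENNReal.ofReal u) u := by
        intro u
        by_cases h : u ∈ Set.Ioc 0 (W ω) <;> simp [Set.indicator_apply, h]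
      calc ∫⁻ u : ℝ, ENNReal.ofReal (g u ω)
          = ∫⁻ u : ℝ, Set.indicator (Set.Ioc 0 (W ω))
              (fun u => ENNReal.ofReal u) u := by
            simp only [hgeq, hcomm]
        _ = ∫⁻ u in Set.Ioc 0 (W ω), ENNReal.ofReal u := by
            rw [lintegral_indicator measurableSet_Ioc]
        _ = ENNReal.ofReal (∫ u in Set.Ioc 0 (W ω), u) := by
            rw [← ofReal_integral_eq_lintegral_ofReal]
            · exact continuous_id.integrableOn_Ioc
            · filter_upwards [ae_restrict_mem measurableSet_Ioc] with u hu
              exact hu.1.le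
        _ = ENNReal.ofReal (W ω ^ 2 / 2) := by
            rw [← intervalIntegral.integral_of_le hw, integral_id]
            norm_num
    · -- W ω < 0 : g (·, ω) is the indicator of Ioo (W ω) 0 of -id
      have hgeq : ∀ u : ℝ, g u ω
          = Set.indicator (Set.Ioo (W ω) 0) (fun u => -u) u := by
        intro u
        rcases lt_trichotomy u (W ω) with hu | hu | hu
        · have h1 : u ≤ W ω := hu.le
          have h3 : u < 0 := lt_trans hu hw
          have h2 : u ∉ Set.Ioo (W ω) 0 := by
            simp only [Set.mem_Ioo, not_and_or, not_lt]
            left; exact hu.le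
          simp [hg, h1, h3, Set.indicator_of_notMem h2]
        · subst hu
          have h2 : W ω ∉ Set.Ioo (W ω) 0 := by simp
          simp [hg, hw, Set.indicator_of_notMem h2]
        · rcases lt_trichotomy u 0 with h1 | h1 | h1
          · have h2 : u ∈ Set.Ioo (W ω) 0 := ⟨hu, h1⟩
            simp [hg, not_le.2 hu, h1, Set.indicator_of_mem h2]
          · subst h1
            have h2 : (0 : ℝ) ∉ Set.Ioo (W ω) 0 := by simp
            simp [hg, Set.indicator_of_notMem h2]
          · have h2 : u ∉ Set.Ioo (W ω) 0 := by
              simp only [Set.mem_Ioo, not_and_or, not_lt]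
              right; exact h1.le
            have h3 : ¬ u ≤ W ω := not_le.2 hu
            simp [hg, h3, not_lt.2 h1.le, Set.indicator_of_notMem h2]
      have hcomm : ∀ u : ℝ,
          ENNReal.ofReal (Set.indicator (Set.Ioo (W ω) 0) (fun u => -u) u)
          = Set.indicator (Set.Ioo (W ω) 0) (fun u => ENNReal.ofReal (-u)) u := by
        intro u
        by_cases h : u ∈ Set.Ioo (W ω) 0 <;> simp [Set.indicator_apply, h]
      calc ∫⁻ u : ℝ, ENNReal.ofReal (g u ω)
          = ∫⁻ u : ℝ, Set.indicator (Set.Ioo (W ω) 0)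
              (fun u => ENNReal.ofReal (-u)) u := by
            simp only [hgeq, hcomm]
        _ = ∫⁻ u in Set.Ioo (W ω) 0, ENNReal.ofReal (-u) := by
            rw [lintegral_indicator measurableSet_Ioo]
        _ = ENNReal.ofReal (∫ u in Set.Ioo (W ω) 0, -u) := by
            rw [← ofReal_integral_eq_lintegral_ofReal]
            · exact (continuous_id.neg.integrableOn_Ioc).mono_set Set.Ioo_subset_Ioc_self
            · filter_upwards [ae_restrict_mem measurableSet_Ioo] with u hu
              exact neg_nonneg.2 hu.2.le
        _ = ENNReal.ofReal (W ω ^ 2 / 2) := by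
            rw [← integral_Ioc_eq_integral_Ioo,
              ← intervalIntegral.integral_of_le hw.le,
              intervalIntegral.integral_neg, integral_id]
            congr 1
            ring
  -- Tonelli
  have hswap :
      ∫⁻ u : ℝ, ∫⁻ ω, ENNReal.ofReal (g u ω) ∂μ
        = ∫⁻ ω, (∫⁻ u : ℝ, ENNReal.ofReal (g u ω)) ∂μ :=
    lintegral_lintegral_swap (ENNReal.measurable_ofReal.comp hgprod).aemeasurable
  have hWhalf : Integrable (fun ω => W ω ^ 2 / 2) μ := hWsq.div_const 2
  have hkey : ∫⁻ u : ℝ, ENNReal.ofReal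
      (u * (G (-b * u - a) - (if u < 0 then (1 : ℝ) else 0)))
      = ENNReal.ofReal (∫ ω, W ω ^ 2 / 2 ∂μ) := by
    simp_rw [hC, hswap, hE]
    rw [← ofReal_integral_eq_lintegral_ofReal hWhalf
      (Filter.Eventually.of_forall fun ω => by positivity)]
  -- integrability
  have hint : Integrable
      (fun u : ℝ => u * (G (-b * u - a) - (if u < 0 then (1 : ℝ) else 0)))
      volume := by
    refine ⟨hfmeas.aestronglyMeasurable, ?_⟩
    rw [hasFiniteIntegral_iff_ofReal (Filter.Eventually.of_forall hfnn), hkey]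
    exact ENNReal.ofReal_lt_top
  refine ⟨hint, ?_⟩
  -- value of the integral
  have hval : ∫ u : ℝ, u * (G (-b * u - a) - (if u < 0 then (1 : ℝ) else 0))
      = ∫ ω, W ω ^ 2 / 2 ∂μ := by
    rw [integral_eq_lintegral_of_nonneg_ae (Filter.Eventually.of_forall hfnn)
      hfmeas.aestronglyMeasurable, hkey,
      ENNReal.toReal_ofReal (integral_nonneg fun ω => by positivity)]
  rw [hval]
  -- final algebra
  have hEq : (fun ω => W ω ^ 2 / 2)
      = fun ω => ((1 / b ^ 2) * (a ^ 2 / 2) + ((1 / b ^ 2) * (1 / 2)) * Z ω ^ 2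
          + ((1 / b ^ 2) * a) * Z ω) := by
    funext ω
    have : W ω = (-a - Z ω) / b := rfl
    rw [this]
    field_simp
    ring
  have i1 : Integrable (fun ω => 1 / b ^ 2 * (a ^ 2 / 2)
      + 1 / b ^ 2 * (1 / 2) * Z ω ^ 2) μ :=
    (integrable_const _).add (hZsq.const_mul _)
  have i2 : Integrable (fun ω => 1 / b ^ 2 * a * Z ω) μ := hZint.const_mul _
  have i3 : Integrable (fun ω : Ω => 1 / b ^ 2 * (a ^ 2 / 2)) μ := integrable_const _
  have i4 : Integrable (fun ω => 1 / b ^ 2 * (1 / 2) * Z ω ^ 2) μ := hZsq.const_mul _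
  rw [hEq, integral_add i1 i2, integral_add i3 i4,
    integral_const, integral_const_mul, integral_const_mul]
  simp only [probReal_univ, measure_univ, ENNReal.toReal_one, one_smul, smul_eq_mul]
  ring
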